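/- Let n ≥ 3 be an integer and 0 ≤ k ≤ n−2. Let ι be the reversal map on (n−1)-tuples of positive reals, ι(a_1,…,a_{n−1}) = (a_{n−1},…,a_1), and let ρ̃ be the map on pairs of (n−1)-tuples given by ρ̃(a,b) = (ι(b), ι(a)). Then φ(n,n−2−k) ∘ ρ̃ ∘ φ(n,k) = ρ̃ as maps on pairs of (n−1)-tuples of positive reals; equivalently, φ(n,n−2−k) = ρ̃ ∘ φ(n,k)^{−1} ∘ ρ̃. -/

import Mathlib

/-- The map `φ(n,k)` on pairs of `(n-1)`-tuples, modelled as functions on `ZMod n`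
with the value at the class `0` (the subscript `n`) equal to `0` by convention. -/
noncomputable def phiMap (n k : ℕ) (zy : (ZMod n → ℝ) × (ZMod n → ℝ)) :
    (ZMod n → ℝ) × (ZMod n → ℝ) :=
  (fun j => if j = 0 then 0 else
      zy.2 j * (zy.1 (((k + 2 : ℕ) : ZMod n) - j) + zy.2 (j - 1)) /
        (zy.1 (((k + 1 : ℕ) : ZMod n) - j) + zy.2 j),
   fun j => if j = 0 then 0 else
      zy.1 j * (zy.1 (j + 1) + zy.2 (((k : ℕ) : ZMod n) - j)) /
        (zy.1 j + zy.2 (((k + 1 : ℕ) : ZMod n) - j)))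

/-- The reversal map `ι` on `(n-1)`-tuples: `ι(a)_p = a_{n-p}`. -/
def iotaMap (n : ℕ) (a : ZMod n → ℝ) : ZMod n → ℝ := fun p => a (-p)

/-- The map `ρ̃(a,b) = (ι(b), ι(a))` on pairs of `(n-1)`-tuples. -/
def rhoMap (n : ℕ) (ab : (ZMod n → ℝ) × (ZMod n → ℝ)) :
    (ZMod n → ℝ) × (ZMod n → ℝ) :=
  (iotaMap n ab.2, iotaMap n ab.1)

/-- `φ(n,n−2−k) ∘ ρ̃ ∘ φ(n,k) = ρ̃` on pairs of positive `(n-1)`-tuples;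
equivalently `φ(n,n−2−k) = ρ̃ ∘ φ(n,k)⁻¹ ∘ ρ̃`. -/
theorem stmt_3 (n k : ℕ) (hn : 3 ≤ n) (hk : k ≤ n - 2)
    (z y : ZMod n → ℝ) (hz0 : z 0 = 0) (hy0 : y 0 = 0)
    (hzpos : ∀ p : ZMod n, p ≠ 0 → 0 < z p)
    (hypos : ∀ p : ZMod n, p ≠ 0 → 0 < y p) :
    phiMap n (n - 2 - k) (rhoMap n (phiMap n k (z, y))) = rhoMap n (z, y) := by
  haveI : NeZero n := ⟨by omega⟩
  -- `K` abbreviates the cast of `k`.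
  have hK1 : (k : ZMod n) + 1 ≠ 0 := by
    intro h
    have h' : ((k + 1 : ℕ) : ZMod n) = 0 := by push_cast; exact h
    rw [ZMod.natCast_eq_zero_iff] at h'
    have := Nat.le_of_dvd (by omega) h'
    omega
  have hznn : ∀ a : ZMod n, 0 ≤ z a := by
    intro a; by_cases h : a = 0
    · simp [h, hz0]
    · exact (hzpos a h).le
  have hynn : ∀ a : ZMod n, 0 ≤ y a := by
    intro a; by_cases h : a = 0
    · simp [h, hy0]
    · exact (hypos a h).le
  have hS : ∀ a b : ZMod n, (a ≠ 0 ∨ b ≠ 0) → z a + y b ≠ 0 := by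
    rintro a b (h | h)
    · exact ne_of_gt (add_pos_of_pos_of_nonneg (hzpos a h) (hynn b))
    · exact ne_of_gt (add_pos_of_nonneg_of_pos (hznn a) (hypos b h))
  -- raw (if-free) formulas for the inner map
  have hfst : ∀ q : ZMod n, (phiMap n k (z, y)).1 q =
      y q * (z ((k : ZMod n) + 2 - q) + y (q - 1)) / (z ((k : ZMod n) + 1 - q) + y q) := by
    intro q
    by_cases h : q = 0
    · simp [phiMap, h, hy0]
    · simp only [phiMap, if_neg h]
      push_cast
      ring_nf
  have hsnd : ∀ q : ZMod n, (phiMap n k (z, y)).2 q =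
      z q * (z (q + 1) + y ((k : ZMod n) - q)) / (z q + y ((k : ZMod n) + 1 - q)) := by
    intro q
    by_cases h : q = 0
    · simp [phiMap, h, hz0]
    · simp only [phiMap, if_neg h]
      push_cast
      ring_nf
  obtain ⟨W, hW⟩ : ∃ W, W = rhoMap n (phiMap n k (z, y)) := ⟨_, rfl⟩
  rw [← hW]
  have hW1 : ∀ p a b c d : ZMod n, a = -p → b = 1 - p → c = (k : ZMod n) + p →
      d = (k : ZMod n) + 1 + p → W.1 p = z a * (z b + y c) / (z a + y d) := by
    rintro p a b c d rfl rfl rfl rfl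
    rw [hW]
    simp only [rhoMap, iotaMap]
    rw [hsnd (-p)]
    ring_nf
  have hW2 : ∀ p a b c d : ZMod n, a = -p → b = (k : ZMod n) + 2 + p → c = -1 - p →
      d = (k : ZMod n) + 1 + p → W.2 p = y a * (z b + y c) / (z d + y a) := by
    rintro p a b c d rfl rfl rfl rfl
    rw [hW]
    simp only [rhoMap, iotaMap]
    rw [hfst (-p)]
    ring_nf
  -- casts for the companion parameter
  have hm2 : ((n - 2 - k + 2 : ℕ) : ZMod n) = -(k : ZMod n) := by
    rw [show n - 2 - k + 2 = n - k by omega, Nat.cast_sub (by omega), ZMod.natCast_self, zero_sub]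
  have hm1 : ((n - 2 - k + 1 : ℕ) : ZMod n) = -(k : ZMod n) - 1 := by
    rw [show n - 2 - k + 1 = n - (k + 1) by omega, Nat.cast_sub (by omega), ZMod.natCast_self,
      zero_sub]
    push_cast; ring
  have hm0 : ((n - 2 - k : ℕ) : ZMod n) = -(k : ZMod n) - 2 := by
    rw [show n - 2 - k = n - (k + 2) by omega, Nat.cast_sub (by omega), ZMod.natCast_self,
      zero_sub]
    push_cast; ring
  apply Prod.ext
  · funext j
    show (if j = 0 then 0 else _) = iotaMap n y j
    by_cases hj : j = 0
    · simp [phiMap, iotaMap, hj, hy0]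
    · simp only [phiMap, iotaMap, if_neg hj, hm2, hm1]
      rw [hW2 j (-j) ((k:ZMod n)+2+j) (-1-j) ((k:ZMod n)+1+j) (by ring) (by ring) (by ring)
            (by ring),
          hW2 (j-1) (1-j) ((k:ZMod n)+1+j) (-j) ((k:ZMod n)+j) (by ring) (by ring) (by ring)
            (by ring),
          hW1 (-(k:ZMod n)-j) ((k:ZMod n)+j) ((k:ZMod n)+1+j) (-j) (1-j) (by ring) (by ring)
            (by ring) (by ring),
          hW1 (-(k:ZMod n)-1-j) ((k:ZMod n)+1+j) ((k:ZMod n)+2+j) (-1-j) (-j) (by ring) (by ring)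
            (by ring) (by ring)]
      have h2 : z ((k:ZMod n)+1+j) + y (-j) ≠ 0 := hS _ _ (Or.inr (neg_ne_zero.mpr hj))
      have h1 : z ((k:ZMod n)+j) + y (1-j) ≠ 0 := by
        refine hS _ _ ?_
        rcases eq_or_ne ((1:ZMod n) - j) 0 with h | h
        · left
          have hj1 : (1:ZMod n) = j := by rwa [sub_eq_zero] at h
          intro hzz
          exact hK1 (by rw [← hj1] at hzz; linear_combination hzz)
        · right; exact h
      have h3 : z ((k:ZMod n)+2+j) + y (-1-j) ≠ 0 := by
        refine hS _ _ ?_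
        rcases eq_or_ne ((-1:ZMod n) - j) 0 with h | h
        · left
          have hj1 : (-1:ZMod n) = j := by rwa [sub_eq_zero] at h
          intro hzz
          exact hK1 (by rw [← hj1] at hzz; linear_combination hzz)
        · right; exact h
      rw [← add_div, ← add_div,
        show z ((k:ZMod n)+j) * (z ((k:ZMod n)+1+j) + y (-j))
            + y (1-j) * (z ((k:ZMod n)+1+j) + y (-j))
            = (z ((k:ZMod n)+j) + y (1-j)) * (z ((k:ZMod n)+1+j) + y (-j)) by ring,
        show z ((k:ZMod n)+1+j) * (z ((k:ZMod n)+2+j) + y (-1-j))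
            + y (-j) * (z ((k:ZMod n)+2+j) + y (-1-j))
            = (z ((k:ZMod n)+1+j) + y (-j)) * (z ((k:ZMod n)+2+j) + y (-1-j)) by ring,
        mul_div_cancel_left₀ _ h1, mul_div_cancel_left₀ _ h2]
      field_simp
  · funext j
    show (if j = 0 then 0 else _) = iotaMap n z j
    by_cases hj : j = 0
    · simp [phiMap, iotaMap, hj, hz0]
    · simp only [phiMap, iotaMap, if_neg hj, hm1, hm0]
      rw [hW1 j (-j) (1-j) ((k:ZMod n)+j) ((k:ZMod n)+1+j) (by ring) (by ring) (by ring) (by ring),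
          hW1 (j+1) (-1-j) (-j) ((k:ZMod n)+1+j) ((k:ZMod n)+2+j) (by ring) (by ring) (by ring)
            (by ring),
          hW2 (-(k:ZMod n)-2-j) ((k:ZMod n)+2+j) (-j) ((k:ZMod n)+1+j) (-1-j) (by ring) (by ring)
            (by ring) (by ring),
          hW2 (-(k:ZMod n)-1-j) ((k:ZMod n)+1+j) (1-j) ((k:ZMod n)+j) (-j) (by ring) (by ring)
            (by ring) (by ring)]
      have h2 : z (-j) + y ((k:ZMod n)+1+j) ≠ 0 := hS _ _ (Or.inl (neg_ne_zero.mpr hj))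
      have h1 : z (1-j) + y ((k:ZMod n)+j) ≠ 0 := by
        refine hS _ _ ?_
        rcases eq_or_ne ((1:ZMod n) - j) 0 with h | h
        · right
          have hj1 : (1:ZMod n) = j := by rwa [sub_eq_zero] at h
          intro hzz
          exact hK1 (by rw [← hj1] at hzz; linear_combination hzz)
        · left; exact h
      have h3 : z (-1-j) + y ((k:ZMod n)+2+j) ≠ 0 := by
        refine hS _ _ ?_
        rcases eq_or_ne ((-1:ZMod n) - j) 0 with h | h
        · right
          have hj1 : (-1:ZMod n) = j := by rwa [sub_eq_zero] at h
          intro hzz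
          exact hK1 (by rw [← hj1] at hzz; linear_combination hzz)
        · left; exact h
      rw [← add_div, ← add_div,
        show z (-1-j) * (z (-j) + y ((k:ZMod n)+1+j))
            + y ((k:ZMod n)+2+j) * (z (-j) + y ((k:ZMod n)+1+j))
            = (z (-1-j) + y ((k:ZMod n)+2+j)) * (z (-j) + y ((k:ZMod n)+1+j)) by ring,
        show z (-j) * (z (1-j) + y ((k:ZMod n)+j))
            + y ((k:ZMod n)+1+j) * (z (1-j) + y ((k:ZMod n)+j))
            = (z (-j) + y ((k:ZMod n)+1+j)) * (z (1-j) + y ((k:ZMod n)+j)) by ring,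
        mul_div_cancel_left₀ _ h3, mul_div_cancel_left₀ _ h2]
      field_simp
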